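/- arXiv:2506.20955 — 6 statements merged into one kernel-verified Lean document; each statement's English description precedes it below -/
import Mathlib

section
/- Suppose 0 < θ < 8a/(27Rb). Then there exist real numbers v_α, v_β with b < v_α < v_β such that the partial derivative ∂p/∂v(v,θ) = 2a/v³ - Rθ/(v-b)² is negative on (b, v_α), zero at v_α and v_β, positive on (v_α, v_β), and negative on (v_β, +∞); consequently the map v ↦ p(v,θ) is strictly decreasing on (b, v_α], strictly increasing on [v_α, v_β], and strictly decreasing on [v_β, +∞). -/
set_option maxHeartbeats 800000


/-- Subcritical van der Waals isotherm: for `0 < θ < 8a/(27Rb)` there exist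
`b < v_α < v_β` such that `∂p/∂v (v,θ) = 2a/v³ - Rθ/(v-b)²` is negative on
`(b, v_α)`, vanishes at `v_α` and `v_β`, is positive on `(v_α, v_β)` and
negative on `(v_β, ∞)`; consequently `v ↦ p(v,θ)` is strictly decreasing on
`(b, v_α]`, strictly increasing on `[v_α, v_β]`, and strictly decreasing on
`[v_β, ∞)`. -/
theorem vdw_subcritical_nonmonotone
    (a b R θ : ℝ) (ha : 0 < a) (hb : 0 < b) (hR : 0 < R)
    (hθpos : 0 < θ) (hθ : θ < 8 * a / (27 * R * b)) :
    ∃ vα vβ : ℝ, b < vα ∧ vα < vβ ∧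
      (∀ v ∈ Set.Ioo b vα, 2 * a / v ^ 3 - R * θ / (v - b) ^ 2 < 0) ∧
      2 * a / vα ^ 3 - R * θ / (vα - b) ^ 2 = 0 ∧
      2 * a / vβ ^ 3 - R * θ / (vβ - b) ^ 2 = 0 ∧
      (∀ v ∈ Set.Ioo vα vβ, 0 < 2 * a / v ^ 3 - R * θ / (v - b) ^ 2) ∧
      (∀ v ∈ Set.Ioi vβ, 2 * a / v ^ 3 - R * θ / (v - b) ^ 2 < 0) ∧
      StrictAntiOn (fun v : ℝ => -a / v ^ 2 + R * θ / (v - b)) (Set.Ioc b vα) ∧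
      StrictMonoOn (fun v : ℝ => -a / v ^ 2 + R * θ / (v - b)) (Set.Icc vα vβ) ∧
      StrictAntiOn (fun v : ℝ => -a / v ^ 2 + R * θ / (v - b)) (Set.Ici vβ) := by
  set c := R * θ with hc
  have hcpos : 0 < c := mul_pos hR hθpos
  set f : ℝ → ℝ := fun v => 2 * a * (v - b) ^ 2 / v ^ 3 with hfdef
  -- derivative of f
  have hfd : ∀ v : ℝ, v ≠ 0 →
      HasDerivAt f (2 * a * (v - b) * (3 * b - v) / v ^ 4) v := by
    intro v hv
    have h1 : HasDerivAt (fun v : ℝ => 2 * a * (v - b) ^ 2)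
        (2 * a * (2 * (v - b))) v := by
      have h := (((hasDerivAt_id v).sub_const b).pow 2).const_mul (2 * a)
      simpa using h
    have h3 : HasDerivAt (fun v : ℝ => v ^ 3) (3 * v ^ 2) v := by
      simpa using hasDerivAt_pow 3 v
    have h := h1.div h3 (pow_ne_zero 3 hv)
    refine h.congr_deriv ?_
    rw [div_eq_div_iff (pow_ne_zero 2 (pow_ne_zero 3 hv)) (pow_ne_zero 4 hv)]
    ring
  -- continuity of f
  have hfc : ∀ s : Set ℝ, (∀ v ∈ s, v ≠ 0) → ContinuousOn f s := by
    intro s hs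
    exact ContinuousOn.div (by fun_prop) (by fun_prop)
      (fun v hv => pow_ne_zero 3 (hs v hv))
  have hfb : f b = 0 := by simp [hfdef]
  have hf3b : f (3 * b) = 8 * a / (27 * b) := by
    show 2 * a * (3 * b - b) ^ 2 / (3 * b) ^ 3 = 8 * a / (27 * b)
    field_simp
    ring
  have hclt : c < f (3 * b) := by
    rw [hf3b]
    have h1 : c < R * (8 * a / (27 * R * b)) := by
      exact mul_lt_mul_of_pos_left hθ hR
    have h2 : R * (8 * a / (27 * R * b)) = 8 * a / (27 * b) := by
      field_simp
    linarith [h1, h2.symm.le]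
  -- strict monotonicity of f on [b, 3b]
  have hmono : StrictMonoOn f (Set.Icc b (3 * b)) := by
    apply strictMonoOn_of_deriv_pos (convex_Icc _ _)
      (hfc _ (fun v hv => ne_of_gt (lt_of_lt_of_le hb hv.1)))
    intro v hv
    rw [interior_Icc] at hv
    have hv0 : (0 : ℝ) < v := hb.trans hv.1
    rw [(hfd v (ne_of_gt hv0)).deriv]
    apply div_pos
    · have h1 : 0 < v - b := sub_pos.mpr hv.1
      have h2 : 0 < 3 * b - v := sub_pos.mpr hv.2
      exact mul_pos (mul_pos (by linarith) h1) h2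
    · positivity
  -- strict antitonicity of f on [3b, ∞)
  have hanti : StrictAntiOn f (Set.Ici (3 * b)) := by
    apply strictAntiOn_of_deriv_neg (convex_Ici _)
      (hfc _ (fun v hv =>
        ne_of_gt (lt_of_lt_of_le (by linarith : (0:ℝ) < 3 * b) hv)))
    intro v hv
    rw [interior_Ici] at hv
    have hv3 : 3 * b < v := hv
    have hv0 : (0 : ℝ) < v := by nlinarith
    rw [(hfd v (ne_of_gt hv0)).deriv]
    apply div_neg_of_neg_of_pos
    · have h1 : 0 < v - b := by nlinarith
      have h2 : 3 * b - v < 0 := by linarith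
      exact mul_neg_of_pos_of_neg (mul_pos (by linarith) h1) h2
    · positivity
  -- existence of vα in (b, 3b)
  have hb3b : b ≤ 3 * b := by linarith
  have hmem : c ∈ Set.Ioo (f b) (f (3 * b)) := ⟨by rw [hfb]; exact hcpos, hclt⟩
  obtain ⟨vα, hvαmem, hvαeq⟩ := intermediate_value_Ioo hb3b
    (hfc _ (fun v hv => ne_of_gt (lt_of_lt_of_le hb hv.1))) hmem
  -- existence of vβ in (3b, M)
  set M := 3 * b + 2 * a / c with hM
  have h2ac : 0 < 2 * a / c := by positivity
  have hM3 : 3 * b < M := by rw [hM]; linarith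
  have hM0 : (0 : ℝ) < M := by linarith [hb]
  have hMb : b < M := by linarith
  have hfM : f M < c := by
    show 2 * a * (M - b) ^ 2 / M ^ 3 < c
    rw [div_lt_iff₀ (by positivity)]
    have h1 : (M - b) ^ 2 < M ^ 2 := by nlinarith
    have h2 : 2 * a < c * M := by
      have hcm : c * M = c * (3 * b) + 2 * a := by
        rw [hM, mul_add, mul_div_cancel₀ _ (ne_of_gt hcpos)]
      have := mul_pos hcpos (by linarith : (0:ℝ) < 3 * b)
      linarith
    nlinarith [sq_nonneg (M - b), mul_pos hM0 hM0]
  have hmem' : c ∈ Set.Ioo (f M) (f (3 * b)) := ⟨hfM, hclt⟩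
  obtain ⟨vβ, hvβmem, hvβeq⟩ := intermediate_value_Ioo' (le_of_lt hM3)
    (hfc _ (fun v hv =>
      ne_of_gt (lt_of_lt_of_le (by linarith : (0:ℝ) < 3 * b) hv.1))) hmem'
  have hbvα : b < vα := hvαmem.1
  have hvα3b : vα < 3 * b := hvαmem.2
  have h3bvβ : 3 * b < vβ := hvβmem.1
  have hvαβ : vα < vβ := lt_trans hvα3b h3bvβ
  have hbvβ : b < vβ := lt_trans hbvα hvαβ
  -- key identity
  have key : ∀ v : ℝ, b < v →
      2 * a / v ^ 3 - R * θ / (v - b) ^ 2 = (f v - c) / (v - b) ^ 2 := by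
    intro v hv
    have hv0 : (0 : ℝ) < v := hb.trans hv
    have hvb : v - b ≠ 0 := sub_ne_zero.mpr (ne_of_gt hv)
    show 2 * a / v ^ 3 - R * θ / (v - b) ^ 2
      = (2 * a * (v - b) ^ 2 / v ^ 3 - c) / (v - b) ^ 2
    rw [hc]
    field_simp
  -- sign facts
  have hneg1 : ∀ v ∈ Set.Ioo b vα, 2 * a / v ^ 3 - R * θ / (v - b) ^ 2 < 0 := by
    intro v hv
    rw [key v hv.1]
    apply div_neg_of_neg_of_pos
    · have : f v < f vα := hmono ⟨le_of_lt hv.1, by linarith [hv.2]⟩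
        ⟨le_of_lt hbvα, le_of_lt hvα3b⟩ hv.2
      rw [hvαeq] at this
      linarith
    · have : 0 < v - b := sub_pos.mpr hv.1
      positivity
  have hzα : 2 * a / vα ^ 3 - R * θ / (vα - b) ^ 2 = 0 := by
    rw [key vα hbvα, hvαeq, sub_self, zero_div]
  have hzβ : 2 * a / vβ ^ 3 - R * θ / (vβ - b) ^ 2 = 0 := by
    rw [key vβ hbvβ, hvβeq, sub_self, zero_div]
  have hpos : ∀ v ∈ Set.Ioo vα vβ, 0 < 2 * a / v ^ 3 - R * θ / (v - b) ^ 2 := by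
    intro v hv
    have hbv : b < v := lt_trans hbvα hv.1
    rw [key v hbv]
    apply div_pos
    · have hcf : c < f v := by
        rcases le_or_gt v (3 * b) with h | h
        · have : f vα < f v := hmono ⟨le_of_lt hbvα, le_of_lt hvα3b⟩
            ⟨le_of_lt hbv, h⟩ hv.1
          rw [hvαeq] at this; exact this
        · have : f vβ < f v := hanti (le_of_lt h) (le_of_lt h3bvβ) hv.2
          rw [hvβeq] at this; exact this
      linarith
    · have : 0 < v - b := sub_pos.mpr hbv
      positivity
  have hneg2 : ∀ v ∈ Set.Ioi vβ, 2 * a / v ^ 3 - R * θ / (v - b) ^ 2 < 0 := by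
    intro v hv
    have hvβv : vβ < v := hv
    have hbv : b < v := lt_trans hbvβ hvβv
    rw [key v hbv]
    apply div_neg_of_neg_of_pos
    · have : f v < f vβ := hanti (le_of_lt h3bvβ) (le_of_lt (lt_trans h3bvβ hvβv)) hvβv
      rw [hvβeq] at this
      linarith
    · have : 0 < v - b := sub_pos.mpr hbv
      positivity
  -- derivative of p
  have hpd : ∀ v : ℝ, b < v →
      HasDerivAt (fun v : ℝ => -a / v ^ 2 + R * θ / (v - b))
        (2 * a / v ^ 3 - R * θ / (v - b) ^ 2) v := by
    intro v hv
    have hv0 : v ≠ 0 := ne_of_gt (hb.trans hv)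
    have hvb : v - b ≠ 0 := sub_ne_zero.mpr (ne_of_gt hv)
    have h1 : HasDerivAt (fun v : ℝ => -a / v ^ 2)
        ((0 * v ^ 2 - (-a) * (2 * v ^ 1)) / (v ^ 2) ^ 2) v :=
      (hasDerivAt_const v (-a)).div (by simpa using hasDerivAt_pow 2 v)
        (pow_ne_zero 2 hv0)
    have h2 : HasDerivAt (fun v : ℝ => R * θ / (v - b))
        ((0 * (v - b) - R * θ * 1) / (v - b) ^ 2) v :=
      (hasDerivAt_const v (R * θ)).div ((hasDerivAt_id v).sub_const b) hvb
    refine (h1.add h2).congr_deriv ?_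
    rw [div_add_div _ _ (pow_ne_zero 2 (pow_ne_zero 2 hv0)) (pow_ne_zero 2 hvb),
      div_sub_div _ _ (pow_ne_zero 3 hv0) (pow_ne_zero 2 hvb),
      div_eq_div_iff (mul_ne_zero (pow_ne_zero 2 (pow_ne_zero 2 hv0)) (pow_ne_zero 2 hvb))
        (mul_ne_zero (pow_ne_zero 3 hv0) (pow_ne_zero 2 hvb))]
    ring
  -- continuity of p
  have hpc : ∀ s : Set ℝ, (∀ v ∈ s, b < v) →
      ContinuousOn (fun v : ℝ => -a / v ^ 2 + R * θ / (v - b)) s := by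
    intro s hs
    apply ContinuousOn.add
    · exact ContinuousOn.div (by fun_prop) (by fun_prop)
        (fun v hv => pow_ne_zero 2 (ne_of_gt (hb.trans (hs v hv))))
    · exact ContinuousOn.div (by fun_prop) (by fun_prop)
        (fun v hv => sub_ne_zero.mpr (ne_of_gt (hs v hv)))
  refine ⟨vα, vβ, hbvα, hvαβ, hneg1, hzα, hzβ, hpos, hneg2, ?_, ?_, ?_⟩
  · apply strictAntiOn_of_deriv_neg (convex_Ioc _ _) (hpc _ (fun v hv => hv.1))
    intro v hv
    rw [interior_Ioc] at hv
    rw [(hpd v hv.1).deriv]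
    exact hneg1 v hv
  · apply strictMonoOn_of_deriv_pos (convex_Icc _ _)
      (hpc _ (fun v hv => lt_of_lt_of_le hbvα hv.1))
    intro v hv
    rw [interior_Icc] at hv
    rw [(hpd v (lt_trans hbvα hv.1)).deriv]
    exact hpos v hv
  · apply strictAntiOn_of_deriv_neg (convex_Ici _)
      (hpc _ (fun v hv => lt_of_lt_of_le hbvβ hv))
    intro v hv
    rw [interior_Ici] at hv
    rw [(hpd v (lt_trans hbvβ hv)).deriv]
    exact hneg2 v hv
end

section
/- If θ ≥ 8a/(27Rb), then the map v ↦ p(v,θ) is strictly decreasing on (b, +∞). -/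
private theorem vdw_key (b v₁ v₂ : ℝ) (hb : 0 < b) (h1 : b < v₁) (h12 : v₁ < v₂) :
    27 * b * (v₁ + v₂) * (v₁ - b) * (v₂ - b) < 8 * v₁^2 * v₂^2 := by
  have h2 : b < v₂ := h1.trans h12
  have hQ : 0 < (v₂ - v₁)^2 := pow_pos (sub_pos.2 h12) 2
  rcases le_or_gt (27*b) (4*(v₁+v₂)) with hs | hs
  · nlinarith [sq_nonneg (16*v₁*v₂ - 27*b*(v₁+v₂)),
      mul_pos (mul_pos (mul_pos hb hb) (by linarith : (0:ℝ) < v₁ + v₂)) (by linarith : (0:ℝ) < 5*(v₁+v₂) - 32*b)]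
  · have hpos : 0 < 27*b*(v₁+v₂) - 4*(v₁+v₂)^2 + 2*(v₂-v₁)^2 := by
      nlinarith [mul_pos (by linarith : (0:ℝ) < v₁+v₂) (by linarith : (0:ℝ) < 27*b - 4*(v₁+v₂))]
    nlinarith [mul_nonneg (mul_nonneg (by linarith : (0:ℝ) ≤ v₁+v₂) (sq_nonneg (v₁+v₂-6*b))) (by linarith : (0:ℝ) ≤ 2*(v₁+v₂) - 3*b),
      mul_pos hQ hpos]

/-- Supercritical van der Waals isotherm: if `θ ≥ 8a/(27Rb)` then
`v ↦ p(v,θ) = -a/v² + Rθ/(v-b)` is strictly decreasing on `(b, ∞)`. -/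
theorem vdw_supercritical_strictAnti
    (a b R θ : ℝ) (ha : 0 < a) (hb : 0 < b) (hR : 0 < R)
    (hθpos : 0 < θ) (hθ : 8 * a / (27 * R * b) ≤ θ) :
    StrictAntiOn (fun v : ℝ => -a / v ^ 2 + R * θ / (v - b)) (Set.Ioi b) := by
  intro v₁ hv₁ v₂ hv₂ h12
  simp only [Set.mem_Ioi] at hv₁ hv₂
  have h10 : (0:ℝ) < v₁ := hb.trans hv₁
  have h20 : (0:ℝ) < v₂ := hb.trans hv₂
  have h1b : (0:ℝ) < v₁ - b := sub_pos.2 hv₁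
  have h2b : (0:ℝ) < v₂ - b := sub_pos.2 hv₂
  have hRθ : 8 * a ≤ 27 * b * (R * θ) := by
    have := (div_le_iff₀ (by positivity : (0:ℝ) < 27 * R * b)).1 hθ
    nlinarith
  have hkey := vdw_key b v₁ v₂ hb hv₁ h12
  have hnum : 0 < (v₂ - v₁) * (R * θ * (v₁^2 * v₂^2) - a * (v₁ + v₂) * ((v₁ - b) * (v₂ - b))) := by
    apply mul_pos (sub_pos.2 h12)
    have h27 : 8 * a * (v₁^2 * v₂^2) ≤ 27 * b * (R * θ) * (v₁^2 * v₂^2) :=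
      mul_le_mul_of_nonneg_right hRθ (by positivity)
    nlinarith [mul_pos ha (mul_pos h1b h2b), mul_lt_mul_of_pos_left hkey ha]
  have hsub : (-a / v₁ ^ 2 + R * θ / (v₁ - b)) - (-a / v₂ ^ 2 + R * θ / (v₂ - b))
      = (v₂ - v₁) * (R * θ * (v₁^2 * v₂^2) - a * (v₁ + v₂) * ((v₁ - b) * (v₂ - b)))
        / (v₁^2 * v₂^2 * ((v₁ - b) * (v₂ - b))) := by
    field_simp
    ring
  have : 0 < (-a / v₁ ^ 2 + R * θ / (v₁ - b)) - (-a / v₂ ^ 2 + R * θ / (v₂ - b)) := by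
    rw [hsub]
    positivity
  simpa using sub_pos.1 this
end

section
/- Let ε > 0, β ≥ 0, and let (v, u, θ, χ, μ) be real-valued functions of (x,t) on an open subset U of ℝ², each of class C², with v > b and θ > 0 on U, satisfying pointwise on U the one-dimensional Lagrangian Navier–Stokes/Allen–Cahn system: v_t = u_x; u_t + (Rθ/(v−b) − a/v²)_x = (u_x/v)_x − (ε/2)(χ_x²/v²)_x; θ_t + (Rθ/(v−b))·u_x − (θ^β θ_x/v)_x = u_x²/v + v·μ²; χ_t = −v·μ; μ = (1/ε)(χ³ − χ) − ε·(χ_x/v)_x. Then the following entropy-energy identity holds pointwise on U: ∂_t[ u²/(2θ̄) + (χ² − 1)²/(4εθ̄) + ε·χ_x²/(2θ̄·v) + Φ(v) + Ψ(θ) ] + θ^β θ_x²/(v θ²) + u_x²/(v θ) + v μ²/θ = (1/θ̄)(Rθ̄/(v̄−b) − a/v̄²)·u_x + ∂_x[ (1/θ̄)( u·u_x/v − R·u·θ/(v−b) + a·u/v² ) + (1/θ̄ − 1/θ)·θ^β θ_x/v + (ε/θ̄)·χ_x χ_t/v − (ε/(2θ̄))·χ_x²·u/v² ]. -/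
/-- Partial derivative in the first (spatial) variable. -/
noncomputable def pdx (f : ℝ → ℝ → ℝ) (x t : ℝ) : ℝ := deriv (fun y => f y t) x

/-- Partial derivative in the second (time) variable. -/
noncomputable def pdt (f : ℝ → ℝ → ℝ) (x t : ℝ) : ℝ := deriv (fun s => f x s) t

/-- The energy function
`Φ(v) = (1/θ̄)[(Rθ̄/(v̄−b) − a/v̄²)(v − v̄) − (a/v − a/v̄) − Rθ̄ ln((v−b)/(v̄−b))]`. -/
noncomputable def PhiVdw (a b R vbar θbar v : ℝ) : ℝ :=
  (1 / θbar) * ((R * θbar / (vbar - b) - a / vbar ^ 2) * (v - vbar)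
    - (a / v - a / vbar) - R * θbar * Real.log ((v - b) / (vbar - b)))

/-- The entropy function `Ψ(θ) = (θ − θ̄)/θ̄ − ln(θ/θ̄)`. -/
noncomputable def PsiEnt (θbar θ : ℝ) : ℝ := (θ - θbar) / θbar - Real.log (θ / θbar)

/- Auxiliary helpers -/

lemma sliceX_cd {n : ℕ∞} {f : ℝ → ℝ → ℝ} {x t : ℝ}
    (h : ContDiffAt ℝ n (fun p : ℝ × ℝ => f p.1 p.2) (x, t)) :
    ContDiffAt ℝ n (fun y => f y t) x :=
  h.comp x (ContDiffAt.prodMk contDiffAt_id contDiffAt_const)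

lemma sliceT_cd {n : ℕ∞} {f : ℝ → ℝ → ℝ} {x t : ℝ}
    (h : ContDiffAt ℝ n (fun p : ℝ × ℝ => f p.1 p.2) (x, t)) :
    ContDiffAt ℝ n (fun s => f x s) t :=
  h.comp t (ContDiffAt.prodMk contDiffAt_const contDiffAt_id)

lemma contDiffAt_one_deriv {g : ℝ → ℝ} {x : ℝ} (h : ContDiffAt ℝ 2 g x) :
    ContDiffAt ℝ 1 (deriv g) x := by
  have h1 : ContDiffAt ℝ 1 (fderiv ℝ g) x := h.fderiv_right (by norm_num)
  have h2 : ContDiffAt ℝ 1 (fun y => fderiv ℝ g y 1) x := h1.clm_apply contDiffAt_const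
  exact h2

lemma pdx_eq_fderiv_apply {f : ℝ → ℝ → ℝ} {x t : ℝ}
    (h : DifferentiableAt ℝ (fun p : ℝ × ℝ => f p.1 p.2) (x, t)) :
    pdx f x t = fderiv ℝ (fun p : ℝ × ℝ => f p.1 p.2) (x, t) (1, 0) := by
  have hc : HasDerivAt (fun y : ℝ => ((y, t) : ℝ × ℝ)) ((1 : ℝ), (0 : ℝ)) x :=
    HasDerivAt.prodMk (hasDerivAt_id x) (hasDerivAt_const x t)
  have h2 := h.hasFDerivAt.comp_hasDerivAt x hc
  exact h2.deriv

lemma pdt_eq_fderiv_apply {f : ℝ → ℝ → ℝ} {x t : ℝ}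
    (h : DifferentiableAt ℝ (fun p : ℝ × ℝ => f p.1 p.2) (x, t)) :
    pdt f x t = fderiv ℝ (fun p : ℝ × ℝ => f p.1 p.2) (x, t) (0, 1) := by
  have hc : HasDerivAt (fun s : ℝ => ((x, s) : ℝ × ℝ)) ((0 : ℝ), (1 : ℝ)) t :=
    HasDerivAt.prodMk (hasDerivAt_const t x) (hasDerivAt_id t)
  have h2 := h.hasFDerivAt.comp_hasDerivAt t hc
  exact h2.deriv

set_option maxHeartbeats 4000000 in
/-- Entropy-energy identity for the 1D Lagrangian compressible
Navier–Stokes/Allen–Cahn system with van der Waals pressure: for `C²`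
functions `(v,u,θ,χ,μ)` on an open set `U ⊆ ℝ²` with `v > b`, `θ > 0`,
satisfying the five equations of the system, one has pointwise on `U`:
`∂_t[u²/(2θ̄) + (χ²−1)²/(4εθ̄) + εχ_x²/(2θ̄v) + Φ(v) + Ψ(θ)]
 + θ^β θ_x²/(vθ²) + u_x²/(vθ) + vμ²/θ
 = (1/θ̄)(Rθ̄/(v̄−b) − a/v̄²)u_x
 + ∂_x[(1/θ̄)(u u_x/v − R u θ/(v−b) + a u/v²)
       + (1/θ̄ − 1/θ)θ^β θ_x/v + (ε/θ̄)χ_x χ_t/v − (ε/(2θ̄))χ_x² u/v²]`. -/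
theorem entropy_energy_identity
    (a b R ε β vbar θbar : ℝ)
    (ha : 0 < a) (hb : 0 < b) (hR : 0 < R) (hε : 0 < ε) (hβ : 0 ≤ β)
    (hvbar : b < vbar) (hθbar : 0 < θbar)
    (U : Set (ℝ × ℝ)) (hU : IsOpen U)
    (v u θ χ μ : ℝ → ℝ → ℝ)
    (hv : ContDiffOn ℝ 2 (fun p : ℝ × ℝ => v p.1 p.2) U)
    (hu : ContDiffOn ℝ 2 (fun p : ℝ × ℝ => u p.1 p.2) U)
    (hθ : ContDiffOn ℝ 2 (fun p : ℝ × ℝ => θ p.1 p.2) U)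
    (hχ : ContDiffOn ℝ 2 (fun p : ℝ × ℝ => χ p.1 p.2) U)
    (hμ : ContDiffOn ℝ 2 (fun p : ℝ × ℝ => μ p.1 p.2) U)
    (hvb : ∀ x t, (x, t) ∈ U → b < v x t)
    (hθpos : ∀ x t, (x, t) ∈ U → 0 < θ x t)
    (hmass : ∀ x t, (x, t) ∈ U → pdt v x t = pdx u x t)
    (hmom : ∀ x t, (x, t) ∈ U →
      pdt u x t
        + pdx (fun x t => R * θ x t / (v x t - b) - a / (v x t) ^ 2) x t
      = pdx (fun x t => pdx u x t / v x t) x t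
        - (ε / 2) * pdx (fun x t => (pdx χ x t) ^ 2 / (v x t) ^ 2) x t)
    (henergy : ∀ x t, (x, t) ∈ U →
      pdt θ x t + (R * θ x t / (v x t - b)) * pdx u x t
        - pdx (fun x t => (θ x t) ^ β * pdx θ x t / v x t) x t
      = (pdx u x t) ^ 2 / v x t + v x t * (μ x t) ^ 2)
    (hphase : ∀ x t, (x, t) ∈ U → pdt χ x t = -(v x t) * μ x t)
    (hpot : ∀ x t, (x, t) ∈ U →
      μ x t = (1 / ε) * ((χ x t) ^ 3 - χ x t)
        - ε * pdx (fun x t => pdx χ x t / v x t) x t) :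
    ∀ x t, (x, t) ∈ U →
      pdt (fun x t =>
          (u x t) ^ 2 / (2 * θbar)
          + ((χ x t) ^ 2 - 1) ^ 2 / (4 * ε * θbar)
          + ε * (pdx χ x t) ^ 2 / (2 * θbar * v x t)
          + PhiVdw a b R vbar θbar (v x t)
          + PsiEnt θbar (θ x t)) x t
        + (θ x t) ^ β * (pdx θ x t) ^ 2 / (v x t * (θ x t) ^ 2)
        + (pdx u x t) ^ 2 / (v x t * θ x t)
        + v x t * (μ x t) ^ 2 / θ x t
      = (1 / θbar) * (R * θbar / (vbar - b) - a / vbar ^ 2) * pdx u x t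
        + pdx (fun x t =>
            (1 / θbar) * (u x t * pdx u x t / v x t
              - R * u x t * θ x t / (v x t - b) + a * u x t / (v x t) ^ 2)
            + (1 / θbar - 1 / θ x t) * (θ x t) ^ β * pdx θ x t / v x t
            + (ε / θbar) * (pdx χ x t * pdt χ x t / v x t)
            - (ε / (2 * θbar)) * (pdx χ x t) ^ 2 * u x t / (v x t) ^ 2) x t := by
  intro x t hp
  -- basic nonvanishing facts
  have hbv : b < v x t := hvb x t hp
  have hVpos : 0 < v x t := hb.trans hbv
  have hV0 : v x t ≠ 0 := ne_of_gt hVpos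
  have hVb0 : v x t - b ≠ 0 := sub_ne_zero.mpr (ne_of_gt hbv)
  have hV20 : (v x t) ^ 2 ≠ 0 := pow_ne_zero _ hV0
  have hT0 : θ x t ≠ 0 := ne_of_gt (hθpos x t hp)
  have htb0 : θbar ≠ 0 := ne_of_gt hθbar
  have hε0 : ε ≠ 0 := ne_of_gt hε
  have hvbb0 : vbar - b ≠ 0 := sub_ne_zero.mpr (ne_of_gt hvbar)
  have hvbar0 : vbar ≠ 0 := ne_of_gt (hb.trans hvbar)
  have hlog1 : (v x t - b) / (vbar - b) ≠ 0 :=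
    div_ne_zero (sub_ne_zero.mpr (ne_of_gt hbv)) hvbb0
  have hlog2 : θ x t / θbar ≠ 0 := div_ne_zero hT0 htb0
  have h2tbv : 2 * θbar * v x t ≠ 0 := mul_ne_zero (mul_ne_zero two_ne_zero htb0) hV0
  -- smoothness at the point
  have hmem : U ∈ nhds (x, t) := hU.mem_nhds hp
  have hvC : ContDiffAt ℝ 2 (fun p : ℝ × ℝ => v p.1 p.2) (x, t) := hv.contDiffAt hmem
  have huC : ContDiffAt ℝ 2 (fun p : ℝ × ℝ => u p.1 p.2) (x, t) := hu.contDiffAt hmem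
  have hθC : ContDiffAt ℝ 2 (fun p : ℝ × ℝ => θ p.1 p.2) (x, t) := hθ.contDiffAt hmem
  have hχC : ContDiffAt ℝ 2 (fun p : ℝ × ℝ => χ p.1 p.2) (x, t) := hχ.contDiffAt hmem
  -- first order spatial derivatives
  have dVx : HasDerivAt (fun y => v y t) (pdx v x t) x :=
    ((sliceX_cd hvC).differentiableAt (by norm_num)).hasDerivAt
  have dUxA : HasDerivAt (fun y => u y t) (pdx u x t) x :=
    ((sliceX_cd huC).differentiableAt (by norm_num)).hasDerivAt
  have dThxA : HasDerivAt (fun y => θ y t) (pdx θ x t) x :=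
    ((sliceX_cd hθC).differentiableAt (by norm_num)).hasDerivAt
  have dXxA : HasDerivAt (fun y => χ y t) (pdx χ x t) x :=
    ((sliceX_cd hχC).differentiableAt (by norm_num)).hasDerivAt
  -- first order time derivatives
  have dVtA : HasDerivAt (fun s => v x s) (pdt v x t) t :=
    ((sliceT_cd hvC).differentiableAt (by norm_num)).hasDerivAt
  have dUtA : HasDerivAt (fun s => u x s) (pdt u x t) t :=
    ((sliceT_cd huC).differentiableAt (by norm_num)).hasDerivAt
  have dThtA : HasDerivAt (fun s => θ x s) (pdt θ x t) t :=
    ((sliceT_cd hθC).differentiableAt (by norm_num)).hasDerivAt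
  have dXtA : HasDerivAt (fun s => χ x s) (pdt χ x t) t :=
    ((sliceT_cd hχC).differentiableAt (by norm_num)).hasDerivAt
  -- second order spatial derivatives
  have dUxx : HasDerivAt (fun y => pdx u y t) (deriv (fun y => pdx u y t) x) x :=
    ((contDiffAt_one_deriv (sliceX_cd huC)).differentiableAt (by norm_num)).hasDerivAt
  have dThxx : HasDerivAt (fun y => pdx θ y t) (deriv (fun y => pdx θ y t) x) x :=
    ((contDiffAt_one_deriv (sliceX_cd hθC)).differentiableAt (by norm_num)).hasDerivAt
  have dXxx : HasDerivAt (fun y => pdx χ y t) (deriv (fun y => pdx χ y t) x) x :=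
    ((contDiffAt_one_deriv (sliceX_cd hχC)).differentiableAt (by norm_num)).hasDerivAt
  -- the mixed second derivative of χ
  have hχev : ∀ᶠ q in nhds (x, t),
      HasFDerivAt (fun q : ℝ × ℝ => χ q.1 q.2)
        (fderiv ℝ (fun q : ℝ × ℝ => χ q.1 q.2) q) q := by
    filter_upwards [hmem] with q hq
    exact ((hχ.contDiffAt (hU.mem_nhds hq)).differentiableAt (by norm_num)).hasFDerivAt
  have hf1 : ContDiffAt ℝ 1 (fderiv ℝ (fun q : ℝ × ℝ => χ q.1 q.2)) (x, t) :=
    hχC.fderiv_right (by norm_num)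
  have hf2 : HasFDerivAt (fderiv ℝ (fun q : ℝ × ℝ => χ q.1 q.2))
      (fderiv ℝ (fderiv ℝ (fun q : ℝ × ℝ => χ q.1 q.2)) (x, t)) (x, t) :=
    (hf1.differentiableAt (by norm_num)).hasFDerivAt
  have hsym := second_derivative_symmetric_of_eventually hχev hf2
    ((1 : ℝ), (0 : ℝ)) ((0 : ℝ), (1 : ℝ))
  -- K is the mixed derivative
  have hcurveT : HasDerivAt (fun s : ℝ => ((x, s) : ℝ × ℝ)) ((0 : ℝ), (1 : ℝ)) t :=
    HasDerivAt.prodMk (hasDerivAt_const t x) (hasDerivAt_id t)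
  have hcurveX : HasDerivAt (fun y : ℝ => ((y, t) : ℝ × ℝ)) ((1 : ℝ), (0 : ℝ)) x :=
    HasDerivAt.prodMk (hasDerivAt_id x) (hasDerivAt_const x t)
  have dGT : HasDerivAt (fun s => fderiv ℝ (fun q : ℝ × ℝ => χ q.1 q.2) (x, s) (1, 0))
      (fderiv ℝ (fderiv ℝ (fun q : ℝ × ℝ => χ q.1 q.2)) (x, t) (0, 1) (1, 0)) t := by
    have h := (hf2.clm_apply (hasFDerivAt_const ((1 : ℝ), (0 : ℝ)) ((x, t) : ℝ × ℝ))).comp_hasDerivAt t hcurveT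
    simpa [Function.comp_def] using h
  have dGX : HasDerivAt (fun y => fderiv ℝ (fun q : ℝ × ℝ => χ q.1 q.2) (y, t) (0, 1))
      (fderiv ℝ (fderiv ℝ (fun q : ℝ × ℝ => χ q.1 q.2)) (x, t) (1, 0) (0, 1)) x := by
    have h := (hf2.clm_apply (hasFDerivAt_const ((0 : ℝ), (1 : ℝ)) ((x, t) : ℝ × ℝ))).comp_hasDerivAt x hcurveX
    simpa [Function.comp_def] using h
  have hsetT : {s : ℝ | (x, s) ∈ U} ∈ nhds t :=
    (continuous_const.prodMk continuous_id).continuousAt.preimage_mem_nhds hmem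
  have hsetX : {y : ℝ | (y, t) ∈ U} ∈ nhds x :=
    (continuous_id.prodMk continuous_const).continuousAt.preimage_mem_nhds hmem
  have heqT : (fun s => pdx χ x s) =ᶠ[nhds t]
      (fun s => fderiv ℝ (fun q : ℝ × ℝ => χ q.1 q.2) (x, s) (1, 0)) := by
    filter_upwards [hsetT] with s hs
    exact pdx_eq_fderiv_apply ((hχ.contDiffAt (hU.mem_nhds hs)).differentiableAt (by norm_num))
  have heqX : (fun y => pdt χ y t) =ᶠ[nhds x]
      (fun y => fderiv ℝ (fun q : ℝ × ℝ => χ q.1 q.2) (y, t) (0, 1)) := by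
    filter_upwards [hsetX] with y hy
    exact pdt_eq_fderiv_apply ((hχ.contDiffAt (hU.mem_nhds hy)).differentiableAt (by norm_num))
  have dXxt : HasDerivAt (fun s => pdx χ x s)
      (fderiv ℝ (fderiv ℝ (fun q : ℝ × ℝ => χ q.1 q.2)) (x, t) (0, 1) (1, 0)) t :=
    heqT.hasDerivAt_iff.mpr dGT
  have dXtx : HasDerivAt (fun y => pdt χ y t)
      (fderiv ℝ (fderiv ℝ (fun q : ℝ × ℝ => χ q.1 q.2)) (x, t) (0, 1) (1, 0)) x := by
    rw [← hsym]
    exact heqX.hasDerivAt_iff.mpr dGX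
  -- expansions of the composite spatial derivatives in the equations
  have eA1 : pdx (fun x t => R * θ x t / (v x t - b) - a / (v x t) ^ 2) x t
      = R * pdx θ x t / (v x t - b) - R * θ x t * pdx v x t / (v x t - b) ^ 2
        + 2 * a * pdx v x t / (v x t) ^ 3 := by
    have h := (((dThxA.const_mul R).div (dVx.sub_const b) hVb0).sub
      ((hasDerivAt_const x a).div (dVx.pow 2) hV20)).deriv
    exact h.trans (by simp only [Pi.add_apply, Pi.sub_apply, Pi.mul_apply, Pi.div_apply, Pi.pow_apply]; field_simp; ring)
  have eA2 : pdx (fun x t => pdx u x t / v x t) x t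
      = deriv (fun y => pdx u y t) x / v x t - pdx u x t * pdx v x t / (v x t) ^ 2 := by
    have h := (dUxx.div dVx hV0).deriv
    exact h.trans (by field_simp)
  have eA3 : pdx (fun x t => (pdx χ x t) ^ 2 / (v x t) ^ 2) x t
      = 2 * pdx χ x t * deriv (fun y => pdx χ y t) x / (v x t) ^ 2
        - 2 * (pdx χ x t) ^ 2 * pdx v x t / (v x t) ^ 3 := by
    have h := ((dXxx.pow 2).div (dVx.pow 2) hV20).deriv
    exact h.trans (by simp only [Pi.add_apply, Pi.sub_apply, Pi.mul_apply, Pi.div_apply, Pi.pow_apply]; field_simp; ring)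
  have eA4 : pdx (fun x t => (θ x t) ^ β * pdx θ x t / v x t) x t
      = (β * (θ x t) ^ (β - 1) * pdx θ x t * pdx θ x t
          + (θ x t) ^ β * deriv (fun y => pdx θ y t) x) / v x t
        - (θ x t) ^ β * pdx θ x t * pdx v x t / (v x t) ^ 2 := by
    have h := (((dThxA.rpow_const (p := β) (Or.inl hT0)).mul dThxx).div dVx hV0).deriv
    exact h.trans (by simp only [Pi.add_apply, Pi.sub_apply, Pi.mul_apply, Pi.div_apply, Pi.pow_apply]; field_simp;)
  have eA5 : pdx (fun x t => pdx χ x t / v x t) x t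
      = deriv (fun y => pdx χ y t) x / v x t - pdx χ x t * pdx v x t / (v x t) ^ 2 := by
    have h := (dXxx.div dVx hV0).deriv
    exact h.trans (by field_simp)
  -- the time derivative of the total energy
  have hE1 := (dUtA.pow 2).div_const (2 * θbar)
  have hE2 := (((dXtA.pow 2).sub_const 1).pow 2).div_const (4 * ε * θbar)
  have hE3 := ((dXxt.pow 2).const_mul ε).div (dVtA.const_mul (2 * θbar)) h2tbv
  have hE4p1 := (dVtA.sub_const vbar).const_mul (R * θbar / (vbar - b) - a / vbar ^ 2)
  have hE4p2 := ((hasDerivAt_const t a).div dVtA hV0).sub_const (a / vbar)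
  have hE4p3 := (((dVtA.sub_const b).div_const (vbar - b)).log hlog1).const_mul (R * θbar)
  have hE4 := ((hE4p1.sub hE4p2).sub hE4p3).const_mul (1 / θbar)
  have hE5 := ((dThtA.sub_const θbar).div_const θbar).sub ((dThtA.div_const θbar).log hlog2)
  have hE := (((hE1.add hE2).add hE3).add hE4).add hE5
  have eE : pdt (fun x t =>
          (u x t) ^ 2 / (2 * θbar)
          + ((χ x t) ^ 2 - 1) ^ 2 / (4 * ε * θbar)
          + ε * (pdx χ x t) ^ 2 / (2 * θbar * v x t)
          + PhiVdw a b R vbar θbar (v x t)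
          + PsiEnt θbar (θ x t)) x t
      = u x t * pdt u x t / θbar
        + ((χ x t) ^ 3 - χ x t) * pdt χ x t / (ε * θbar)
        + ε * pdx χ x t * (fderiv ℝ (fderiv ℝ (fun q : ℝ × ℝ => χ q.1 q.2)) (x, t) (0, 1) (1, 0))
            / (θbar * v x t)
        - ε * (pdx χ x t) ^ 2 * pdt v x t / (2 * θbar * (v x t) ^ 2)
        + (1 / θbar) * (R * θbar / (vbar - b) - a / vbar ^ 2
            + a / (v x t) ^ 2 - R * θbar / (v x t - b)) * pdt v x t
        + (1 / θbar - 1 / θ x t) * pdt θ x t := by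
    have h := hE.deriv
    simp only [pdt, pdx, PhiVdw, PsiEnt, Pi.add_apply, Pi.sub_apply, Pi.mul_apply, Pi.div_apply, Pi.pow_apply] at h ⊢
    erw [h]
    field_simp
    ring
  -- the spatial derivative of the flux
  have hF1 := (((dUxA.mul dUxx).div dVx hV0).sub
      (((dUxA.const_mul R).mul dThxA).div (dVx.sub_const b) hVb0)).add
      ((dUxA.const_mul a).div (dVx.pow 2) hV20)
  have hF1' := hF1.const_mul (1 / θbar)
  have hF2 := (((((hasDerivAt_const x (1 : ℝ)).div dThxA hT0).const_sub (1 / θbar)).mul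
      (dThxA.rpow_const (p := β) (Or.inl hT0))).mul dThxx).div dVx hV0
  have hF3 := ((dXxx.mul dXtx).div dVx hV0).const_mul (ε / θbar)
  have hF4 := (((dXxx.pow 2).const_mul (ε / (2 * θbar))).mul dUxA).div (dVx.pow 2) hV20
  have hF := ((hF1'.add hF2).add hF3).sub hF4
  have eF : pdx (fun x t =>
            (1 / θbar) * (u x t * pdx u x t / v x t
              - R * u x t * θ x t / (v x t - b) + a * u x t / (v x t) ^ 2)
            + (1 / θbar - 1 / θ x t) * (θ x t) ^ β * pdx θ x t / v x t
            + (ε / θbar) * (pdx χ x t * pdt χ x t / v x t)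
            - (ε / (2 * θbar)) * (pdx χ x t) ^ 2 * u x t / (v x t) ^ 2) x t
      = (1 / θbar) * (pdx u x t * pdx u x t / v x t
            + u x t * pdx (fun x t => pdx u x t / v x t) x t)
        - (1 / θbar) * (pdx u x t * (R * θ x t / (v x t - b) - a / (v x t) ^ 2)
            + u x t * pdx (fun x t => R * θ x t / (v x t - b) - a / (v x t) ^ 2) x t)
        + (pdx θ x t / (θ x t) ^ 2) * ((θ x t) ^ β * pdx θ x t / v x t)
        + (1 / θbar - 1 / θ x t) * pdx (fun x t => (θ x t) ^ β * pdx θ x t / v x t) x t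
        + (ε / θbar) * (pdx (fun x t => pdx χ x t / v x t) x t * pdt χ x t
            + (pdx χ x t / v x t)
              * (fderiv ℝ (fderiv ℝ (fun q : ℝ × ℝ => χ q.1 q.2)) (x, t) (0, 1) (1, 0)))
        - (ε / (2 * θbar)) * (pdx (fun x t => (pdx χ x t) ^ 2 / (v x t) ^ 2) x t * u x t
            + ((pdx χ x t) ^ 2 / (v x t) ^ 2) * pdx u x t) := by
    rw [eA1, eA2, eA3, eA4, eA5]
    have h := hF.deriv
    simp only [pdx, pdt, Pi.add_apply, Pi.sub_apply, Pi.mul_apply, Pi.div_apply, Pi.pow_apply] at h ⊢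
    erw [h]
    field_simp
    ring
  -- pointwise equations
  have eq1 : pdt v x t = pdx u x t := hmass x t hp
  have eq2 := hmom x t hp
  have eq3 := henergy x t hp
  have eq4 : pdt χ x t = -(v x t) * μ x t := hphase x t hp
  have eq5 := hpot x t hp
  have eqUt : pdt u x t
      = pdx (fun x t => pdx u x t / v x t) x t
        - (ε / 2) * pdx (fun x t => (pdx χ x t) ^ 2 / (v x t) ^ 2) x t
        - pdx (fun x t => R * θ x t / (v x t - b) - a / (v x t) ^ 2) x t := by
    linear_combination eq2
  have eqTht : pdt θ x t
      = (pdx u x t) ^ 2 / v x t + v x t * (μ x t) ^ 2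
        - (R * θ x t / (v x t - b)) * pdx u x t
        + pdx (fun x t => (θ x t) ^ β * pdx θ x t / v x t) x t := by
    linear_combination eq3
  rw [eE, eF, eqUt, eqTht, eq1, eq4, eq5]
  field_simp
  ring
end

section
/- Let ε > 0 and let (v, u, θ, χ) be real-valued C² functions of (x,t) on an open subset U of ℝ² with v > b on U, satisfying pointwise the equations v_t = u_x and u_t + (Rθ/(v−b) − a/v²)_x = (u_x/v)_x − (ε/2)(χ_x²/v²)_x. Then the effective-flux identity ∂_t( u − v_x/v ) + ∂_x( Rθ/(v−b) ) = ∂_x( a/v² − (ε/2)(χ_x/v)² ) holds pointwise on U. -/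
open Topology Filter

/-- Slice derivative in the first variable of a function on `ℝ × ℝ`. -/
lemma effFlux_sliceX {E : Type*} [NormedAddCommGroup E] [NormedSpace ℝ E]
    {F : ℝ × ℝ → E} {x t : ℝ} (h : DifferentiableAt ℝ F (x, t)) :
    HasDerivAt (fun y => F (y, t)) (fderiv ℝ F (x, t) (1, 0)) x := by
  have h1 : HasDerivAt (fun y : ℝ => (y, t)) ((1 : ℝ), (0 : ℝ)) x :=
    (hasDerivAt_id x).prodMk (hasDerivAt_const x t)
  exact h.hasFDerivAt.comp_hasDerivAt x h1

/-- Slice derivative in the second variable of a function on `ℝ × ℝ`. -/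
lemma effFlux_sliceT {E : Type*} [NormedAddCommGroup E] [NormedSpace ℝ E]
    {F : ℝ × ℝ → E} {x t : ℝ} (h : DifferentiableAt ℝ F (x, t)) :
    HasDerivAt (fun s => F (x, s)) (fderiv ℝ F (x, t) (0, 1)) t := by
  have h1 : HasDerivAt (fun s : ℝ => (x, s)) ((0 : ℝ), (1 : ℝ)) t :=
    (hasDerivAt_const t x).prodMk (hasDerivAt_id t)
  exact h.hasFDerivAt.comp_hasDerivAt t h1

/-- Basic differentiability facts for a `C²` function of two real variables on an open set. -/
lemma effFlux_facts (f : ℝ → ℝ → ℝ) {U : Set (ℝ × ℝ)} (hU : IsOpen U)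
    (hf : ContDiffOn ℝ 2 (fun p : ℝ × ℝ => f p.1 p.2) U) {x t : ℝ} (hp : (x, t) ∈ U) :
    HasDerivAt (fun y => f y t) (pdx f x t) x ∧
    HasDerivAt (fun s => f x s) (pdt f x t) t ∧
    HasDerivAt (fun y => pdx f y t)
      (fderiv ℝ (fderiv ℝ (fun p : ℝ × ℝ => f p.1 p.2)) (x, t) (1, 0) (1, 0)) x ∧
    HasDerivAt (fun s => pdx f x s)
      (fderiv ℝ (fderiv ℝ (fun p : ℝ × ℝ => f p.1 p.2)) (x, t) (0, 1) (1, 0)) t ∧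
    HasDerivAt (fun y => pdt f y t)
      (fderiv ℝ (fderiv ℝ (fun p : ℝ × ℝ => f p.1 p.2)) (x, t) (1, 0) (0, 1)) x ∧
    IsSymmSndFDerivAt ℝ (fun p : ℝ × ℝ => f p.1 p.2) (x, t) := by
  have hmem := hU.mem_nhds hp
  have hfa : ContDiffAt ℝ 2 (fun p : ℝ × ℝ => f p.1 p.2) (x, t) := hf.contDiffAt hmem
  have hd : DifferentiableAt ℝ (fun p : ℝ × ℝ => f p.1 p.2) (x, t) :=
    hfa.differentiableAt two_ne_zero
  have hΦ : ContDiffOn ℝ 1 (fun q => fderiv ℝ (fun p : ℝ × ℝ => f p.1 p.2) q) U :=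
    hf.fderiv_of_isOpen hU (by norm_num)
  have hΦd : DifferentiableAt ℝ (fun q => fderiv ℝ (fun p : ℝ × ℝ => f p.1 p.2) q) (x, t) :=
    (hΦ.contDiffAt hmem).differentiableAt one_ne_zero
  have h1 : HasDerivAt (fun y => f y t) (pdx f x t) x := by
    have := effFlux_sliceX hd
    rwa [← this.deriv] at this
  have h2 : HasDerivAt (fun s => f x s) (pdt f x t) t := by
    have := effFlux_sliceT hd
    rwa [← this.deriv] at this
  have hΦx := effFlux_sliceX hΦd
  have hΦt := effFlux_sliceT hΦd
  have hevx : ∀ᶠ y in 𝓝 x, (y, t) ∈ U :=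
    (continuous_id.prodMk continuous_const).continuousAt.preimage_mem_nhds hmem
  have hevt : ∀ᶠ s in 𝓝 t, (x, s) ∈ U :=
    (continuous_const.prodMk continuous_id).continuousAt.preimage_mem_nhds hmem
  have hdiff : ∀ q ∈ U, DifferentiableAt ℝ (fun p : ℝ × ℝ => f p.1 p.2) q := fun q hq =>
    (hf.contDiffAt (hU.mem_nhds hq)).differentiableAt two_ne_zero
  have hEx : (fun y => pdx f y t)
      =ᶠ[𝓝 x] fun y => fderiv ℝ (fun p : ℝ × ℝ => f p.1 p.2) (y, t) (1, 0) := by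
    filter_upwards [hevx] with y hy
    exact (effFlux_sliceX (hdiff _ hy)).deriv
  have hEt : (fun s => pdx f x s)
      =ᶠ[𝓝 t] fun s => fderiv ℝ (fun p : ℝ × ℝ => f p.1 p.2) (x, s) (1, 0) := by
    filter_upwards [hevt] with s hs
    exact (effFlux_sliceX (hdiff _ hs)).deriv
  have hEx' : (fun y => pdt f y t)
      =ᶠ[𝓝 x] fun y => fderiv ℝ (fun p : ℝ × ℝ => f p.1 p.2) (y, t) (0, 1) := by
    filter_upwards [hevx] with y hy
    exact (effFlux_sliceT (hdiff _ hy)).deriv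
  have h3 : HasDerivAt (fun y => pdx f y t)
      (fderiv ℝ (fderiv ℝ (fun p : ℝ × ℝ => f p.1 p.2)) (x, t) (1, 0) (1, 0)) x := by
    have := hΦx.clm_apply (hasDerivAt_const x ((1:ℝ), (0:ℝ)))
    simp only [map_zero, add_zero] at this
    exact this.congr_of_eventuallyEq hEx
  have h4 : HasDerivAt (fun s => pdx f x s)
      (fderiv ℝ (fderiv ℝ (fun p : ℝ × ℝ => f p.1 p.2)) (x, t) (0, 1) (1, 0)) t := by
    have := hΦt.clm_apply (hasDerivAt_const t ((1:ℝ), (0:ℝ)))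
    simp only [map_zero, add_zero] at this
    exact this.congr_of_eventuallyEq hEt
  have h5 : HasDerivAt (fun y => pdt f y t)
      (fderiv ℝ (fderiv ℝ (fun p : ℝ × ℝ => f p.1 p.2)) (x, t) (1, 0) (0, 1)) x := by
    have := hΦx.clm_apply (hasDerivAt_const x ((0:ℝ), (1:ℝ)))
    simp only [map_zero, add_zero] at this
    exact this.congr_of_eventuallyEq hEx'
  exact ⟨h1, h2, h3, h4, h5, hfa.isSymmSndFDerivAt (by simp)⟩

/-- Effective-flux identity: for `C²` functions `v, u, θ, χ` on an open set
`U ⊆ ℝ²` with `v > b`, satisfying the mass equation `v_t = u_x` and the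
momentum equation
`u_t + (Rθ/(v−b) − a/v²)_x = (u_x/v)_x − (ε/2)(χ_x²/v²)_x`,
one has pointwise on `U`:
`∂_t(u − v_x/v) + ∂_x(Rθ/(v−b)) = ∂_x(a/v² − (ε/2)(χ_x/v)²)`. -/
theorem effective_flux_identity
    (a b R ε : ℝ) (ha : 0 < a) (hb : 0 < b) (hR : 0 < R) (hε : 0 < ε)
    (U : Set (ℝ × ℝ)) (hU : IsOpen U)
    (v u θ χ : ℝ → ℝ → ℝ)
    (hv : ContDiffOn ℝ 2 (fun p : ℝ × ℝ => v p.1 p.2) U)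
    (hu : ContDiffOn ℝ 2 (fun p : ℝ × ℝ => u p.1 p.2) U)
    (hθ : ContDiffOn ℝ 2 (fun p : ℝ × ℝ => θ p.1 p.2) U)
    (hχ : ContDiffOn ℝ 2 (fun p : ℝ × ℝ => χ p.1 p.2) U)
    (hvb : ∀ x t, (x, t) ∈ U → b < v x t)
    (hmass : ∀ x t, (x, t) ∈ U → pdt v x t = pdx u x t)
    (hmom : ∀ x t, (x, t) ∈ U →
      pdt u x t
        + pdx (fun x t => R * θ x t / (v x t - b) - a / (v x t) ^ 2) x t
      = pdx (fun x t => pdx u x t / v x t) x t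
        - (ε / 2) * pdx (fun x t => (pdx χ x t) ^ 2 / (v x t) ^ 2) x t) :
    ∀ x t, (x, t) ∈ U →
      pdt (fun x t => u x t - pdx v x t / v x t) x t
        + pdx (fun x t => R * θ x t / (v x t - b)) x t
      = pdx (fun x t => a / (v x t) ^ 2 - (ε / 2) * (pdx χ x t / v x t) ^ 2) x t := by
  intro x t hp
  obtain ⟨Hv_x, Hv_t, -, Hvx_t, Hvt_x, hsymv⟩ := effFlux_facts v hU hv hp
  obtain ⟨Hu_x, Hu_t, Hux_x, -, -, -⟩ := effFlux_facts u hU hu hp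
  obtain ⟨Hθ_x, -, -, -, -, -⟩ := effFlux_facts θ hU hθ hp
  obtain ⟨-, -, Hχx_x, -, -, -⟩ := effFlux_facts χ hU hχ hp
  have hv0 : (0:ℝ) < v x t := hb.trans (hvb x t hp)
  have hvne : v x t ≠ 0 := ne_of_gt hv0
  have hvbne : v x t - b ≠ 0 := sub_ne_zero.2 (ne_of_gt (hvb x t hp))
  have hv2ne : (v x t) ^ 2 ≠ 0 := pow_ne_zero 2 hvne
  have hevx : ∀ᶠ y in 𝓝 x, (y, t) ∈ U :=
    (continuous_id.prodMk continuous_const).continuousAt.preimage_mem_nhds (hU.mem_nhds hp)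
  have hEq : (fun y => pdt v y t) =ᶠ[𝓝 x] fun y => pdx u y t := by
    filter_upwards [hevx] with y hy; exact hmass y t hy
  have Hux_x' : HasDerivAt (fun y => pdx u y t)
      (fderiv ℝ (fderiv ℝ (fun p : ℝ × ℝ => v p.1 p.2)) (x, t) (1, 0) (0, 1)) x :=
    Hvt_x.congr_of_eventuallyEq hEq.symm
  have hDt : fderiv ℝ (fderiv ℝ (fun p : ℝ × ℝ => v p.1 p.2)) (x, t) (0, 1) (1, 0)
      = fderiv ℝ (fderiv ℝ (fun p : ℝ × ℝ => u p.1 p.2)) (x, t) (1, 0) (1, 0) :=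
    (hsymv _ _).trans (Hux_x'.unique Hux_x)
  rw [hDt] at Hvx_t
  rw [hmass x t hp] at Hv_t
  have Q1 := (Hu_t.fun_sub (Hvx_t.fun_div Hv_t hvne)).deriv
  have Q2 := (Hux_x.fun_div Hv_x hvne).deriv
  have P1 := (Hθ_x.const_mul R).fun_div (Hv_x.sub_const b) hvbne
  have P2 := (hasDerivAt_const x a).fun_div (Hv_x.fun_pow 2) hv2ne
  have P3 := (Hχx_x.fun_pow 2).fun_div (Hv_x.fun_pow 2) hv2ne
  have E3 := (P1.fun_sub P2).deriv
  have E4 := P1.deriv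
  have E6 := (P2.fun_sub (P3.const_mul (ε/2))).deriv
  have E7 := P3.deriv
  have hm := hmom x t hp
  simp only [div_pow]
  simp only [pdx, pdt] at hm Q1 Q2 E3 E4 E6 E7 ⊢
  rw [Q1, E4, E6]
  rw [E3, Q2, E7] at hm
  linear_combination hm
end

section
/- Let ε > 0, T > 0, and let (v, u, θ, χ) be real-valued C² functions on ℝ × [0,T] with v > b and θ > 0, satisfying pointwise v_t = u_x and u_t + (Rθ/(v−b) − a/v²)_x = (u_x/v)_x − (ε/2)(χ_x²/v²)_x. Define B(x,t) = −a/v(x,t)² + Rθ(x,t)/(v(x,t)−b) + (ε/2)·χ_x(x,t)²/v(x,t)². Then for all (x,t) ∈ ℝ × [0,T]: v(x,t) = D(x,t)·Y(t)·exp( ∫₀ᵗ B(x,s) ds ), where D(x,t) = v(x,0)·exp( ∫₀ˣ (u(y,t) − u(y,0)) dy ) and Y(t) = ( v(0,t)/v(0,0) )·exp( −∫₀ᵗ B(0,s) ds ). -/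
open Set MeasureTheory

namespace KazhAux
noncomputable def Dt (T : ℝ) (f : ℝ → ℝ → ℝ) (x t : ℝ) : ℝ :=
  fderivWithin ℝ (fun p : ℝ × ℝ => f p.1 p.2) (Set.univ ×ˢ Set.Icc 0 T) (x, t) (0, 1)
variable {T : ℝ} {f : ℝ → ℝ → ℝ}
lemma udiff (hT : 0 < T) : UniqueDiffOn ℝ ((Set.univ : Set ℝ) ×ˢ Set.Icc (0:ℝ) T) :=
  uniqueDiffOn_univ.prod (uniqueDiffOn_Icc hT)
lemma slice_contDiff (hf : ContDiffOn ℝ 2 (fun p : ℝ × ℝ => f p.1 p.2) (Set.univ ×ˢ Set.Icc 0 T))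
    {t : ℝ} (ht : t ∈ Set.Icc 0 T) : ContDiff ℝ 2 fun y => f y t := by
  rw [← contDiffOn_univ]
  exact hf.comp ((contDiff_id.prodMk contDiff_const).contDiffOn) fun y _ => ⟨trivial, ht⟩
lemma pdx_slice_contDiff
    (hf : ContDiffOn ℝ 2 (fun p : ℝ × ℝ => f p.1 p.2) (Set.univ ×ˢ Set.Icc 0 T))
    {t : ℝ} (ht : t ∈ Set.Icc 0 T) : ContDiff ℝ 1 fun y => pdx f y t := by
  have h2 := slice_contDiff hf ht
  have h21 : (2 : WithTop ℕ∞) = 1 + 1 := by norm_num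
  have := (contDiff_succ_iff_deriv.mp (h21 ▸ h2)).2.2
  exact this
lemma pdx_eq (hf : ContDiffOn ℝ 2 (fun p : ℝ × ℝ => f p.1 p.2) (Set.univ ×ˢ Set.Icc 0 T))
    {x t : ℝ} (ht : t ∈ Set.Icc 0 T) :
    pdx f x t
      = fderivWithin ℝ (fun p : ℝ × ℝ => f p.1 p.2) (Set.univ ×ˢ Set.Icc 0 T) (x, t) (1, 0) := by
  have hd : DifferentiableWithinAt ℝ (fun p : ℝ × ℝ => f p.1 p.2)
      (Set.univ ×ˢ Set.Icc 0 T) (x, t) :=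
    hf.differentiableOn (by norm_num) _ ⟨trivial, ht⟩
  have hι : HasFDerivAt (fun y : ℝ => (y, t)) (ContinuousLinearMap.inl ℝ ℝ ℝ) x :=
    hasFDerivAt_prodMk_left x t
  have hw : HasFDerivWithinAt (fun y : ℝ => f y t)
      ((fderivWithin ℝ (fun p : ℝ × ℝ => f p.1 p.2) (Set.univ ×ˢ Set.Icc 0 T) (x, t)).comp
        (ContinuousLinearMap.inl ℝ ℝ ℝ)) Set.univ x :=
    by have := hd.hasFDerivWithinAt.comp x hι.hasFDerivWithinAt
         (s := Set.univ) (by intro y _; exact ⟨trivial, ht⟩)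
       exact this
  have h2 : HasDerivAt (fun y : ℝ => f y t)
      (fderivWithin ℝ (fun p : ℝ × ℝ => f p.1 p.2) (Set.univ ×ˢ Set.Icc 0 T) (x, t) (1, 0)) x := by
    have := hw.hasDerivWithinAt
    rw [hasDerivWithinAt_univ] at this
    simpa using this
  exact h2.deriv
lemma continuousOn_pdx (hT : 0 < T)
    (hf : ContDiffOn ℝ 2 (fun p : ℝ × ℝ => f p.1 p.2) (Set.univ ×ˢ Set.Icc 0 T)) :
    ContinuousOn (fun p : ℝ × ℝ => pdx f p.1 p.2) (Set.univ ×ˢ Set.Icc 0 T) := by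
  have h1 : ContinuousOn
      (fderivWithin ℝ (fun p : ℝ × ℝ => f p.1 p.2) (Set.univ ×ˢ Set.Icc 0 T))
      (Set.univ ×ˢ Set.Icc 0 T) :=
    hf.continuousOn_fderivWithin (udiff hT) (by norm_num)
  have h2 : ContinuousOn (fun p : ℝ × ℝ =>
      fderivWithin ℝ (fun p : ℝ × ℝ => f p.1 p.2) (Set.univ ×ˢ Set.Icc 0 T) p ((1:ℝ), (0:ℝ)))
      (Set.univ ×ˢ Set.Icc 0 T) := h1.clm_apply continuousOn_const
  refine h2.congr fun p hp => ?_
  have := pdx_eq hf (x := p.1) (t := p.2) hp.2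
  simpa using this
lemma hasDerivAt_t (hT : 0 < T)
    (hf : ContDiffOn ℝ 2 (fun p : ℝ × ℝ => f p.1 p.2) (Set.univ ×ˢ Set.Icc 0 T))
    {x t : ℝ} (ht : t ∈ Set.Ioo 0 T) :
    HasDerivAt (fun s => f x s) (Dt T f x t) t := by
  have hmem : (Set.univ : Set ℝ) ×ˢ Set.Icc (0:ℝ) T ∈ nhds (x, t) := by
    refine Filter.mem_of_superset ((isOpen_univ.prod isOpen_Ioo).mem_nhds ⟨trivial, ht⟩) ?_
    exact Set.prod_mono subset_rfl Set.Ioo_subset_Icc_self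
  have hd : DifferentiableAt ℝ (fun p : ℝ × ℝ => f p.1 p.2) (x, t) :=
    (hf.contDiffAt hmem).differentiableAt (by norm_num)
  have hι : HasFDerivAt (fun s : ℝ => (x, s)) (ContinuousLinearMap.inr ℝ ℝ ℝ) t :=
    hasFDerivAt_prodMk_right x t
  have h2 := (hd.hasFDerivAt.comp t hι).hasDerivAt
  have hval : Dt T f x t = fderiv ℝ (fun p : ℝ × ℝ => f p.1 p.2) (x, t) (0, 1) := by
    rw [Dt, fderivWithin_of_mem_nhds hmem]
  rw [hval]
  simpa [Function.comp_def] using h2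
lemma pdt_eq (hT : 0 < T)
    (hf : ContDiffOn ℝ 2 (fun p : ℝ × ℝ => f p.1 p.2) (Set.univ ×ˢ Set.Icc 0 T))
    {x t : ℝ} (ht : t ∈ Set.Ioo 0 T) : pdt f x t = Dt T f x t :=
  (hasDerivAt_t hT hf ht).deriv
lemma continuousOn_Dt (hT : 0 < T)
    (hf : ContDiffOn ℝ 2 (fun p : ℝ × ℝ => f p.1 p.2) (Set.univ ×ˢ Set.Icc 0 T)) :
    ContinuousOn (fun p : ℝ × ℝ => Dt T f p.1 p.2) (Set.univ ×ˢ Set.Icc 0 T) := by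
  have h1 : ContinuousOn
      (fderivWithin ℝ (fun p : ℝ × ℝ => f p.1 p.2) (Set.univ ×ˢ Set.Icc 0 T))
      (Set.univ ×ˢ Set.Icc 0 T) :=
    hf.continuousOn_fderivWithin (udiff hT) (by norm_num)
  have h2 : ContinuousOn (fun p : ℝ × ℝ =>
      fderivWithin ℝ (fun p : ℝ × ℝ => f p.1 p.2) (Set.univ ×ˢ Set.Icc 0 T) p ((0:ℝ), (1:ℝ)))
      (Set.univ ×ˢ Set.Icc 0 T) := h1.clm_apply continuousOn_const
  exact h2.congr fun p hp => by simp [Dt]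

lemma swap_le {g : ℝ → ℝ → ℝ} {a b c d : ℝ} (hab : a ≤ b) (hcd : c ≤ d)
    (hg : ContinuousOn (fun p : ℝ × ℝ => g p.1 p.2) (Set.Icc a b ×ˢ Set.Icc c d)) :
    ∫ s in c..d, (∫ y in a..b, g y s) = ∫ y in a..b, ∫ s in c..d, g y s := by
  have hint : IntegrableOn (fun p : ℝ × ℝ => g p.1 p.2) (Set.Icc a b ×ˢ Set.Icc c d) :=
    hg.integrableOn_compact (isCompact_Icc.prod isCompact_Icc)
  have hint2 : Integrable (Function.uncurry fun y s => g y s)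
      ((volume.restrict (Set.Ioc a b)).prod (volume.restrict (Set.Ioc c d))) := by
    rw [Measure.prod_restrict, ← Measure.volume_eq_prod]
    exact hint.mono_set (Set.prod_mono Set.Ioc_subset_Icc_self Set.Ioc_subset_Icc_self)
  rw [intervalIntegral.integral_of_le hcd, intervalIntegral.integral_of_le hab]
  simp_rw [intervalIntegral.integral_of_le hab, intervalIntegral.integral_of_le hcd]
  exact (MeasureTheory.integral_integral_swap hint2).symm

lemma swap_uIcc {g : ℝ → ℝ → ℝ} {x t : ℝ}
    (hg : ContinuousOn (fun p : ℝ × ℝ => g p.1 p.2) (Set.uIcc 0 x ×ˢ Set.uIcc 0 t)) :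
    ∫ s in (0:ℝ)..t, (∫ y in (0:ℝ)..x, g y s) = ∫ y in (0:ℝ)..x, ∫ s in (0:ℝ)..t, g y s := by
  rcases le_total 0 x with hx | hx <;> rcases le_total 0 t with ht | ht
  · exact swap_le hx ht (by rwa [Set.uIcc_of_le hx, Set.uIcc_of_le ht] at hg)
  · have h := swap_le hx ht (by rwa [Set.uIcc_of_le hx, Set.uIcc_of_ge ht] at hg)
    rw [intervalIntegral.integral_symm t 0, h]
    rw [← intervalIntegral.integral_neg]
    exact intervalIntegral.integral_congr fun y _ => by
      rw [intervalIntegral.integral_symm t 0]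
  · have h := swap_le hx ht (by rwa [Set.uIcc_of_ge hx, Set.uIcc_of_le ht] at hg)
    rw [intervalIntegral.integral_symm x 0]
    have : ∫ s in (0:ℝ)..t, (∫ y in (0:ℝ)..x, g y s)
        = ∫ s in (0:ℝ)..t, (-∫ y in x..0, g y s) :=
      intervalIntegral.integral_congr fun s _ => by rw [intervalIntegral.integral_symm x 0]
    rw [this, intervalIntegral.integral_neg, h]
  · have h := swap_le hx ht (by rwa [Set.uIcc_of_ge hx, Set.uIcc_of_ge ht] at hg)
    calc ∫ s in (0:ℝ)..t, (∫ y in (0:ℝ)..x, g y s)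
        = -∫ s in t..0, (∫ y in (0:ℝ)..x, g y s) := intervalIntegral.integral_symm t 0
      _ = -∫ s in t..0, (-∫ y in x..0, g y s) := by
            rw [neg_inj]
            exact intervalIntegral.integral_congr fun s _ =>
              intervalIntegral.integral_symm x 0
      _ = ∫ s in t..0, (∫ y in x..0, g y s) := by
            rw [intervalIntegral.integral_neg, neg_neg]
      _ = ∫ y in x..0, ∫ s in t..0, g y s := h
      _ = -∫ y in x..0, (-∫ s in t..0, g y s) := by
            rw [intervalIntegral.integral_neg, neg_neg]
      _ = -∫ y in x..0, ∫ s in (0:ℝ)..t, g y s := by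
            rw [neg_inj]
            exact intervalIntegral.integral_congr fun y _ =>
              (intervalIntegral.integral_symm t 0).symm
      _ = ∫ y in (0:ℝ)..x, ∫ s in (0:ℝ)..t, g y s :=
            (intervalIntegral.integral_symm x 0).symm

end KazhAux

/-- Kazhikhov-type representation formula for the specific volume (base point
`n = 0`): for `C²` functions `(v,u,θ,χ)` on `ℝ × [0,T]` with `v > b`, `θ > 0`,
satisfying the mass and momentum equations of the 1D Lagrangian
Navier–Stokes/Allen–Cahn system with van der Waals pressure, setting
`B(x,t) = −a/v² + Rθ/(v−b) + (ε/2)χ_x²/v²`, one has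
`v(x,t) = D(x,t)·Y(t)·exp(∫₀ᵗ B(x,s) ds)` where
`D(x,t) = v(x,0)·exp(∫₀ˣ (u(y,t) − u(y,0)) dy)` and
`Y(t) = (v(0,t)/v(0,0))·exp(−∫₀ᵗ B(0,s) ds)`. -/
theorem kazhikhov_volume_representation
    (a b R ε T : ℝ)
    (ha : 0 < a) (hb : 0 < b) (hR : 0 < R) (hε : 0 < ε) (hT : 0 < T)
    (v u θ χ : ℝ → ℝ → ℝ)
    (hv : ContDiffOn ℝ 2 (fun p : ℝ × ℝ => v p.1 p.2) (Set.univ ×ˢ Set.Icc 0 T))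
    (hu : ContDiffOn ℝ 2 (fun p : ℝ × ℝ => u p.1 p.2) (Set.univ ×ˢ Set.Icc 0 T))
    (hθ : ContDiffOn ℝ 2 (fun p : ℝ × ℝ => θ p.1 p.2) (Set.univ ×ˢ Set.Icc 0 T))
    (hχ : ContDiffOn ℝ 2 (fun p : ℝ × ℝ => χ p.1 p.2) (Set.univ ×ˢ Set.Icc 0 T))
    (hvb : ∀ x : ℝ, ∀ t ∈ Set.Icc 0 T, b < v x t)
    (hθpos : ∀ x : ℝ, ∀ t ∈ Set.Icc 0 T, 0 < θ x t)
    (hmass : ∀ x : ℝ, ∀ t ∈ Set.Icc 0 T, pdt v x t = pdx u x t)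
    (hmom : ∀ x : ℝ, ∀ t ∈ Set.Icc 0 T,
      pdt u x t
        + pdx (fun x t => R * θ x t / (v x t - b) - a / (v x t) ^ 2) x t
      = pdx (fun x t => pdx u x t / v x t) x t
        - (ε / 2) * pdx (fun x t => (pdx χ x t) ^ 2 / (v x t) ^ 2) x t) :
    ∀ x : ℝ, ∀ t ∈ Set.Icc 0 T,
      v x t =
        (v x 0 * Real.exp (∫ y in (0:ℝ)..x, (u y t - u y 0)))
        * ((v 0 t / v 0 0) * Real.exp
            (-∫ s in (0:ℝ)..t,
              (-a / (v 0 s) ^ 2 + R * θ 0 s / (v 0 s - b)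
                + (ε / 2) * (pdx χ 0 s) ^ 2 / (v 0 s) ^ 2)))
        * Real.exp
            (∫ s in (0:ℝ)..t,
              (-a / (v x s) ^ 2 + R * θ x s / (v x s - b)
                + (ε / 2) * (pdx χ x s) ^ 2 / (v x s) ^ 2)) := by
  intro x t ht
  have h0T : (0:ℝ) ∈ Set.Icc (0:ℝ) T := Set.left_mem_Icc.mpr hT.le
  have hvpos : ∀ x' : ℝ, ∀ t' ∈ Set.Icc (0:ℝ) T, 0 < v x' t' :=
    fun x' t' ht' => hb.trans (hvb x' t' ht')
  set B : ℝ → ℝ → ℝ := fun x t =>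
    -a / (v x t) ^ 2 + R * θ x t / (v x t - b)
      + (ε / 2) * (pdx χ x t) ^ 2 / (v x t) ^ 2 with hB
  set σf : ℝ → ℝ → ℝ := fun x t => pdx u x t / v x t - B x t with hσ
  -- joint continuity facts
  have hvC := hv.continuousOn
  have huC := hu.continuousOn
  have hθC := hθ.continuousOn
  have hpdxuC := KazhAux.continuousOn_pdx hT hu
  have hpdxχC := KazhAux.continuousOn_pdx hT hχ
  have hvsqne : ∀ p : ℝ × ℝ, p ∈ (Set.univ : Set ℝ) ×ˢ Set.Icc (0:ℝ) T →
      (v p.1 p.2) ^ 2 ≠ 0 := fun p hp => pow_ne_zero 2 (hvpos p.1 p.2 hp.2).ne'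
  have hBC : ContinuousOn (fun p : ℝ × ℝ => B p.1 p.2)
      ((Set.univ : Set ℝ) ×ˢ Set.Icc (0:ℝ) T) := by
    simp only [hB]
    refine ContinuousOn.add (ContinuousOn.add ?_ ?_) ?_
    · exact continuousOn_const.div (hvC.pow 2) hvsqne
    · exact (continuousOn_const.mul hθC).div (hvC.sub continuousOn_const)
        fun p hp => sub_ne_zero.mpr (hvb p.1 p.2 hp.2).ne'
    · exact (continuousOn_const.mul (hpdxχC.pow 2)).div (hvC.pow 2) hvsqne
  have hσC : ContinuousOn (fun p : ℝ × ℝ => σf p.1 p.2)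
      ((Set.univ : Set ℝ) ×ˢ Set.Icc (0:ℝ) T) := by
    simp only [hσ]
    exact (hpdxuC.div hvC fun p hp => (hvpos p.1 p.2 hp.2).ne').sub hBC
  -- time slices of jointly continuous functions
  have tsl : ∀ {g : ℝ → ℝ → ℝ},
      ContinuousOn (fun p : ℝ × ℝ => g p.1 p.2) ((Set.univ : Set ℝ) ×ˢ Set.Icc (0:ℝ) T) →
      ∀ x' : ℝ, ContinuousOn (fun s => g x' s) (Set.Icc (0:ℝ) T) := by
    intro g hg x'
    exact hg.comp ((continuous_const.prodMk continuous_id).continuousOn)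
      fun s hs => ⟨trivial, hs⟩
  have hIccT : Set.Icc (0:ℝ) t ⊆ Set.Icc (0:ℝ) T := Set.Icc_subset_Icc le_rfl ht.2
  have huIcc : Set.uIcc (0:ℝ) t ⊆ Set.Icc (0:ℝ) T := by
    rw [Set.uIcc_of_le ht.1]; exact hIccT
  have hσint : ∀ x' : ℝ, IntervalIntegrable (fun s => σf x' s) volume 0 t :=
    fun x' => ((tsl hσC x').mono huIcc).intervalIntegrable
  have hBint : ∀ x' : ℝ, IntervalIntegrable (fun s => B x' s) volume 0 t :=
    fun x' => ((tsl hBC x').mono huIcc).intervalIntegrable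
  -- Step A
  have stepA : ∀ x' : ℝ,
      Real.log (v x' t) - Real.log (v x' 0)
        = (∫ s in (0:ℝ)..t, σf x' s) + ∫ s in (0:ℝ)..t, B x' s := by
    intro x'
    rw [← intervalIntegral.integral_add (hσint x') (hBint x')]
    have hcont : ContinuousOn (fun s => Real.log (v x' s)) (Set.Icc 0 t) :=
      ((tsl hvC x').mono hIccT).log fun s hs => (hvpos x' s (hIccT hs)).ne'
    have hderiv : ∀ s ∈ Set.Ioo (0:ℝ) t,
        HasDerivWithinAt (fun s => Real.log (v x' s)) (σf x' s + B x' s) (Set.Ioi s) s := by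
      intro s hs
      have hsI : s ∈ Set.Ioo (0:ℝ) T := ⟨hs.1, lt_of_lt_of_le hs.2 ht.2⟩
      have hsIcc : s ∈ Set.Icc (0:ℝ) T := Set.Ioo_subset_Icc_self hsI
      have hv' := KazhAux.hasDerivAt_t hT hv (x := x') hsI
      have hpd : KazhAux.Dt T v x' s = pdx u x' s := by
        rw [← KazhAux.pdt_eq hT hv hsI]; exact hmass x' s hsIcc
      rw [hpd] at hv'
      have hlog := hv'.log (hvpos x' s hsIcc).ne'
      have hval : σf x' s + B x' s = pdx u x' s / v x' s := by
        simp only [hσ]; ring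
      rw [hval]
      exact hlog.hasDerivWithinAt
    have := intervalIntegral.integral_eq_sub_of_hasDeriv_right_of_le ht.1 hcont hderiv
      ((hσint x').add (hBint x'))
    linarith [this]
  -- slice differentiability
  have hq : ∀ (f : ℝ → ℝ → ℝ), ContDiffOn ℝ 2 (fun p : ℝ × ℝ => f p.1 p.2)
        (Set.univ ×ˢ Set.Icc 0 T) → ∀ s ∈ Set.Icc (0:ℝ) T,
        Differentiable ℝ (fun z => f z s) ∧ Differentiable ℝ (fun z => pdx f z s) :=
    fun f hf s hs => ⟨(KazhAux.slice_contDiff hf hs).differentiable (by norm_num),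
      (KazhAux.pdx_slice_contDiff hf hs).differentiable (by norm_num)⟩
  -- Step B
  have stepB : ∀ s ∈ Set.Ioo (0:ℝ) T, ∀ x' : ℝ,
      σf x' s - σf 0 s = ∫ y in (0:ℝ)..x', pdt u y s := by
    intro s hs x'
    have hsIcc : s ∈ Set.Icc (0:ℝ) T := Set.Ioo_subset_Icc_self hs
    have hvq := hq v hv s hsIcc
    have huq := hq u hu s hsIcc
    have hθq := hq θ hθ s hsIcc
    have hχq := hq χ hχ s hsIcc
    have hder : ∀ y : ℝ, HasDerivAt (fun z => σf z s) (pdt u y s) y := by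
      intro y
      have hvne : v y s ≠ 0 := (hvpos y s hsIcc).ne'
      have h1 : DifferentiableAt ℝ (fun z => pdx u z s / v z s) y :=
        (huq.2 y).div (hvq.1 y) hvne
      have h2 : DifferentiableAt ℝ (fun z => R * θ z s / (v z s - b) - a / (v z s) ^ 2) y :=
        (((differentiableAt_const R).mul (hθq.1 y)).div
            ((hvq.1 y).sub (differentiableAt_const b))
            (sub_ne_zero.mpr (hvb y s hsIcc).ne')).sub
          ((differentiableAt_const a).div ((hvq.1 y).pow 2) (pow_ne_zero 2 hvne))
      have h3 : DifferentiableAt ℝ (fun z => (pdx χ z s) ^ 2 / (v z s) ^ 2) y :=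
        ((hχq.2 y).pow 2).div ((hvq.1 y).pow 2) (pow_ne_zero 2 hvne)
      have hfd : HasDerivAt (fun z => (pdx u z s / v z s)
            - (R * θ z s / (v z s - b) - a / (v z s) ^ 2)
            - ε / 2 * ((pdx χ z s) ^ 2 / (v z s) ^ 2))
          (deriv (fun z => pdx u z s / v z s) y
            - deriv (fun z => R * θ z s / (v z s - b) - a / (v z s) ^ 2) y
            - ε / 2 * deriv (fun z => (pdx χ z s) ^ 2 / (v z s) ^ 2) y) y :=
        (h1.hasDerivAt.sub h2.hasDerivAt).sub (h3.hasDerivAt.const_mul (ε/2))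
      have hfeq : (fun z => σf z s) = fun z => (pdx u z s / v z s)
            - (R * θ z s / (v z s - b) - a / (v z s) ^ 2)
            - ε / 2 * ((pdx χ z s) ^ 2 / (v z s) ^ 2) := by
        funext z; simp only [hσ, hB]; ring
      rw [hfeq]
      convert hfd using 1
      have hm := hmom y s hsIcc
      simp only [pdx] at hm ⊢
      linarith [hm]
    have hDtcont : ContinuousOn (fun y => KazhAux.Dt T u y s) (Set.uIcc 0 x') :=
      (KazhAux.continuousOn_Dt hT hu).comp
        ((continuous_id.prodMk continuous_const).continuousOn)
        fun y _ => ⟨trivial, hsIcc⟩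
    have hint : IntervalIntegrable (fun y => pdt u y s) volume 0 x' := by
      refine (hDtcont.congr ?_).intervalIntegrable
      intro y _; exact KazhAux.pdt_eq hT hu hs
    exact (intervalIntegral.integral_eq_sub_of_hasDerivAt (fun y _ => hder y) hint).symm
  -- Step C
  have stepC : (∫ s in (0:ℝ)..t, σf x s) - ∫ s in (0:ℝ)..t, σf 0 s
      = ∫ y in (0:ℝ)..x, (u y t - u y 0) := by
    rw [← intervalIntegral.integral_sub (hσint x) (hσint 0)]
    have hTn : ∀ᵐ s : ℝ, s ≠ T := by
      rw [MeasureTheory.ae_iff]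
      simp only [not_not, Set.setOf_eq_eq_singleton]
      exact measure_singleton T
    have e1 : (∫ s in (0:ℝ)..t, (σf x s - σf 0 s))
        = ∫ s in (0:ℝ)..t, (∫ y in (0:ℝ)..x, KazhAux.Dt T u y s) := by
      apply intervalIntegral.integral_congr_ae
      filter_upwards [hTn] with s hsne hsmem
      rw [Set.uIoc_of_le ht.1] at hsmem
      have hsI : s ∈ Set.Ioo (0:ℝ) T :=
        ⟨hsmem.1, lt_of_le_of_ne (hsmem.2.trans ht.2) hsne⟩
      rw [stepB s hsI x]
      exact intervalIntegral.integral_congr fun y _ => KazhAux.pdt_eq hT hu hsI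
    rw [e1]
    rw [KazhAux.swap_uIcc ((KazhAux.continuousOn_Dt hT hu).mono
      fun p hp => ⟨trivial, huIcc hp.2⟩)]
    apply intervalIntegral.integral_congr
    intro y _
    have hcont : ContinuousOn (fun s => u y s) (Set.Icc 0 t) := (tsl huC y).mono hIccT
    have hderiv : ∀ s ∈ Set.Ioo (0:ℝ) t,
        HasDerivWithinAt (fun s => u y s) (KazhAux.Dt T u y s) (Set.Ioi s) s :=
      fun s hs => (KazhAux.hasDerivAt_t hT hu
        ⟨hs.1, lt_of_lt_of_le hs.2 ht.2⟩).hasDerivWithinAt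
    have hint : IntervalIntegrable (fun s => KazhAux.Dt T u y s) volume 0 t :=
      ((tsl (KazhAux.continuousOn_Dt hT hu) y).mono huIcc).intervalIntegrable
    exact intervalIntegral.integral_eq_sub_of_hasDeriv_right_of_le ht.1 hcont hderiv hint
  -- assemble
  have hA := stepA x
  have hA0 := stepA 0
  have hvxt := hvpos x t ht
  have hvx0 := hvpos x 0 h0T
  have hv0t := hvpos 0 t ht
  have hv00 := hvpos 0 0 h0T
  have hfin : Real.log (v x t)
      = Real.log (v x 0) + (∫ y in (0:ℝ)..x, (u y t - u y 0))
        + (Real.log (v 0 t) - Real.log (v 0 0) - ∫ s in (0:ℝ)..t, B 0 s)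
        + ∫ s in (0:ℝ)..t, B x s := by linarith [hA, hA0, stepC]
  have hgoal : v x t
      = (v x 0 * Real.exp (∫ y in (0:ℝ)..x, (u y t - u y 0)))
        * ((v 0 t / v 0 0) * Real.exp (-∫ s in (0:ℝ)..t, B 0 s))
        * Real.exp (∫ s in (0:ℝ)..t, B x s) := by
    calc v x t = Real.exp (Real.log (v x t)) := (Real.exp_log hvxt).symm
      _ = _ := by
          rw [hfin, Real.exp_add, Real.exp_add, Real.exp_add, Real.exp_sub, Real.exp_sub,
            Real.exp_neg, Real.exp_log hvx0, Real.exp_log hv0t, Real.exp_log hv00]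
          ring
  simpa only [hB] using hgoal
end

section
/- Let f : ℝ → ℝ be continuously differentiable with f' square-integrable on ℝ, suppose the set S = {x ∈ ℝ : f(x) > 0} has finite Lebesgue measure |S|, and suppose f(x) → ℓ as x → +∞ for some ℓ ≤ 0. Then for every x ∈ ℝ: max(f(x), 0)² ≤ |S| · ∫_ℝ f'(y)² dy. -/
open MeasureTheory Filter

/-- Truncated sup bound: if `f` is `C¹` with `f'` square-integrable, the set
`S = {f > 0}` has finite Lebesgue measure, and `f(x) → ℓ ≤ 0` as `x → +∞`,
then `(f(x))₊² ≤ |S|·∫ f'²` for every `x`. -/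
theorem truncated_sup_bound
    (f : ℝ → ℝ) (ℓ : ℝ) (hf : ContDiff ℝ 1 f)
    (hf'2 : Integrable (fun y => (deriv f y) ^ 2))
    (hS : volume {x : ℝ | 0 < f x} ≠ ⊤)
    (hℓ : ℓ ≤ 0)
    (hlim : Tendsto f atTop (nhds ℓ)) :
    ∀ x : ℝ, (max (f x) 0) ^ 2 ≤
      (volume {x : ℝ | 0 < f x}).toReal * ∫ y : ℝ, (deriv f y) ^ 2 := by
  intro x
  have hcont : Continuous f := hf.continuous
  have hfd : Differentiable ℝ f := hf.differentiable one_ne_zero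
  have hdc : Continuous (deriv f) := hf.continuous_deriv le_rfl
  have hIpos : 0 ≤ ∫ y : ℝ, (deriv f y) ^ 2 := integral_nonneg fun y => sq_nonneg _
  have hSr : 0 ≤ (volume {x : ℝ | 0 < f x}).toReal := ENNReal.toReal_nonneg
  have hRHS : 0 ≤ (volume {x : ℝ | 0 < f x}).toReal * ∫ y : ℝ, (deriv f y) ^ 2 :=
    mul_nonneg hSr hIpos
  have key : max (f x) 0 ≤
      Real.sqrt ((volume {x : ℝ | 0 < f x}).toReal * ∫ y : ℝ, (deriv f y) ^ 2) := by
    rcases le_or_gt (f x) 0 with h | h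
    · rw [max_eq_right h]; exact Real.sqrt_nonneg _
    · rw [max_eq_left h.le]
      refine le_of_forall_pos_le_add fun ε hε => ?_
      -- choose the first point `b ≥ x` with `f b ≤ ε`
      set T : Set ℝ := Set.Ici x ∩ {y | f y ≤ ε} with hT
      have hTclosed : IsClosed T := isClosed_Ici.inter (isClosed_le hcont continuous_const)
      have hTne : T.Nonempty := by
        have : ∀ᶠ y in atTop, f y < ε := hlim.eventually_lt_const (lt_of_le_of_lt hℓ hε)
        obtain ⟨N, hN⟩ := eventually_atTop.1 this
        exact ⟨max x N, Set.mem_Ici.2 (le_max_left _ _), (hN _ (le_max_right _ _)).le⟩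
      have hTbdd : BddBelow T := ⟨x, fun y hy => hy.1⟩
      set b := sInf T with hb
      have hbT : b ∈ T := hTclosed.csInf_mem hTne hTbdd
      have hxb : x ≤ b := hbT.1
      have hfb : f b ≤ ε := hbT.2
      -- on `[x, b)` we have `f > ε`, hence `Ico x b ⊆ S`
      have hIco : Set.Ico x b ⊆ {x : ℝ | 0 < f x} := by
        intro y hy
        have : ε < f y := by
          by_contra hcon
          push_neg at hcon
          exact absurd (csInf_le hTbdd ⟨hy.1, hcon⟩) (not_le.2 hy.2)
        exact hε.trans this
      have hlen : b - x ≤ (volume {x : ℝ | 0 < f x}).toReal := by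
        have h1 : volume (Set.Ico x b) ≤ volume {x : ℝ | 0 < f x} := measure_mono hIco
        have h2 := ENNReal.toReal_mono hS h1
        rwa [Real.volume_Ico, ENNReal.toReal_ofReal (sub_nonneg.2 hxb)] at h2
      -- FTC
      have hftc : ∫ y in x..b, deriv f y = f b - f x :=
        intervalIntegral.integral_deriv_eq_sub (fun y _ => hfd y)
          ((hdc.intervalIntegrable x b))
      -- Cauchy–Schwarz on `Ioc x b`
      set μ := volume.restrict (Set.Ioc x b) with hμ
      haveI : IsFiniteMeasure μ := ⟨by
        rw [hμ, Measure.restrict_apply_univ]; exact measure_Ioc_lt_top⟩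
      have hmem : MemLp (deriv f) 2 volume :=
        (memLp_two_iff_integrable_sq hdc.aestronglyMeasurable).2 hf'2
      have hmemabs : MemLp (fun y => |deriv f y|) (ENNReal.ofReal 2) μ := by
        have := ((hmem.restrict (Set.Ioc x b)).norm)
        simpa [Real.norm_eq_abs, ENNReal.ofReal_ofNat] using this
      have hmem1 : MemLp (fun _ : ℝ => (1 : ℝ)) (ENNReal.ofReal 2) μ := memLp_const 1
      have hconj : Real.HolderConjugate 2 2 := Real.holderConjugate_iff.mpr ⟨one_lt_two, by norm_num⟩
      have hCS := integral_mul_le_Lp_mul_Lq_of_nonneg hconj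
        (Filter.Eventually.of_forall fun y => abs_nonneg (deriv f y))
        (Filter.Eventually.of_forall fun _ => zero_le_one) hmemabs hmem1
      have hsq : ∀ y : ℝ, |deriv f y| ^ (2 : ℝ) = (deriv f y) ^ 2 := by
        intro y
        rw [show ((2 : ℝ)) = ((2 : ℕ) : ℝ) by norm_num, Real.rpow_natCast, sq_abs]
      have hint1 : ∫ _ : ℝ, (1 : ℝ) ^ (2 : ℝ) ∂μ = b - x := by
        simp [hμ, Real.volume_Ioc, ENNReal.toReal_ofReal (sub_nonneg.2 hxb), hxb]
      have hset : ∫ y, (deriv f y) ^ 2 ∂μ ≤ ∫ y : ℝ, (deriv f y) ^ 2 :=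
        setIntegral_le_integral hf'2
          (Filter.Eventually.of_forall fun y => sq_nonneg _)
      have hsetpos : 0 ≤ ∫ y, (deriv f y) ^ 2 ∂μ := integral_nonneg fun y => sq_nonneg _
      -- assemble the bound
      have hbound : ∫ y, |deriv f y| ∂μ ≤
          Real.sqrt ((volume {x : ℝ | 0 < f x}).toReal * ∫ y : ℝ, (deriv f y) ^ 2) := by
        have h1 : ∫ y, |deriv f y| ∂μ ≤
            (∫ y, (deriv f y) ^ 2 ∂μ) ^ ((1 : ℝ) / 2) * ((b - x)) ^ ((1 : ℝ) / 2) := by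
          calc ∫ y, |deriv f y| ∂μ = ∫ y, |deriv f y| * 1 ∂μ := by simp
            _ ≤ (∫ y, |deriv f y| ^ (2 : ℝ) ∂μ) ^ ((1 : ℝ) / 2) *
                (∫ _ : ℝ, (1 : ℝ) ^ (2 : ℝ) ∂μ) ^ ((1 : ℝ) / 2) := hCS
            _ = (∫ y, (deriv f y) ^ 2 ∂μ) ^ ((1 : ℝ) / 2) * ((b - x)) ^ ((1 : ℝ) / 2) := by
                rw [hint1]
                congr 1
                congr 1
                exact integral_congr_ae (Filter.Eventually.of_forall fun y => hsq y)
        refine h1.trans ?_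
        rw [Real.sqrt_eq_rpow, Real.mul_rpow hSr hIpos, mul_comm]
        refine mul_le_mul ?_ ?_ ?_ ?_
        · exact Real.rpow_le_rpow (sub_nonneg.2 hxb) hlen (by norm_num)
        · exact Real.rpow_le_rpow hsetpos hset (by norm_num)
        · exact Real.rpow_nonneg hsetpos _
        · exact Real.rpow_nonneg hSr _
      -- final chain
      have habs : f x - ε ≤ ∫ y, |deriv f y| ∂μ := by
        have h0 : f x - ε ≤ f x - f b := by linarith
        have h1 : f x - f b ≤ |∫ y in x..b, deriv f y| := by
          rw [hftc]; rw [abs_sub_comm]; exact le_abs_self _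
        have h2 : |∫ y in x..b, deriv f y| ≤ ∫ y in x..b, |deriv f y| :=
          intervalIntegral.abs_integral_le_integral_abs hxb
        have h3 : ∫ y in x..b, |deriv f y| = ∫ y, |deriv f y| ∂μ := by
          rw [intervalIntegral.integral_of_le hxb]
        linarith
      linarith [habs.trans hbound]
  calc (max (f x) 0) ^ 2
      ≤ (Real.sqrt ((volume {x : ℝ | 0 < f x}).toReal * ∫ y : ℝ, (deriv f y) ^ 2)) ^ 2 :=
        pow_le_pow_left₀ (le_max_right _ _) key 2
    _ = _ := Real.sq_sqrt hRHS
end
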